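/- (Mehler–Heine formula for Charlier polynomials) Let a > 0 be real. For every complex number x, lim_{n→∞} a^n · C_n(x;a)/Γ(n−x) = e^a/Γ(−x), where Γ is the Gamma function and 1/Γ(−x) is interpreted as 0 when −x is a nonpositive integer. -/

import Mathlib

open Filter Topology Finset

/-- The Pochhammer symbol (rising factorial) `(u)_k = u (u+1) ⋯ (u+k-1)`, with `(u)_0 = 1`. -/
noncomputable def poch (u : ℂ) (k : ℕ) : ℂ := ∏ i ∈ range k, (u + i)

/-- The Charlier polynomial `C_n(x; a) = ∑_{j=0}^n (−n)_j (−x)_j / j! · (−1/a)^j`. -/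
noncomputable def charlier (a : ℝ) (n : ℕ) (x : ℂ) : ℂ :=
  ∑ j ∈ range (n + 1),
    poch (-(n : ℂ)) j * poch (-x) j / (j.factorial : ℂ) * (-(1 / (a : ℂ))) ^ j



lemma poch_zero (u : ℂ) : poch u 0 = 1 := by simp [poch]

lemma poch_succ (u : ℂ) (k : ℕ) : poch u (k + 1) = poch u k * (u + k) := by
  simp [poch, Finset.prod_range_succ]

lemma poch_add (u : ℂ) (j m : ℕ) : poch u (j + m) = poch u j * poch (u + j) m := by
  rw [poch, poch, poch, Finset.prod_range_add, mul_eq_mul_left_iff]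
  left
  refine Finset.prod_congr rfl fun i _ => ?_
  push_cast; ring

lemma poch_neg_nat (n j : ℕ) : poch (-(n : ℂ)) j = (-1) ^ j * (n.descFactorial j : ℂ) := by
  induction j with
  | zero => simp [poch]
  | succ j ih =>
      rw [poch_succ, ih, Nat.descFactorial_succ]
      rcases le_or_gt j n with h | h
      · push_cast [h]; ring
      · have h1 : n.descFactorial j = 0 := Nat.descFactorial_eq_zero_iff_lt.mpr h
        have h2 : n - j = 0 := Nat.sub_eq_zero_of_le h.le
        simp [h1, h2]

lemma poch_ne_zero {x : ℂ} (hx : ∀ m : ℕ, x ≠ m) (u : ℕ) (j : ℕ) :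
    poch ((u : ℂ) - x) j ≠ 0 := by
  rw [poch]
  refine Finset.prod_ne_zero_iff.mpr fun i _ => ?_
  have := hx (u + i)
  intro h
  apply this
  push_cast
  linear_combination -h

lemma Gamma_eq_poch {x : ℂ} (hx : ∀ m : ℕ, x ≠ m) (n : ℕ) :
    Complex.Gamma ((n : ℂ) - x) = poch (-x) n * Complex.Gamma (-x) := by
  induction n with
  | zero => simp [poch]
  | succ n ih =>
      have h0 : (n : ℂ) - x ≠ 0 := by
        intro h; exact hx n (by linear_combination -h)
      have : ((n + 1 : ℕ) : ℂ) - x = ((n : ℂ) - x) + 1 := by push_cast; ring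
      rw [this, Complex.Gamma_add_one _ h0, ih, poch_succ]
      ring_nf

lemma norm_nat_add_lb (z : ℂ) (n : ℕ) : (n : ℝ) - ‖z‖ ≤ ‖(n : ℂ) + z‖ := by
  have := norm_add_le ((n : ℂ) + z) (-z)
  simp only [add_neg_cancel_right, norm_neg, Complex.norm_natCast] at this
  linarith

lemma tendsto_inv_nat_add (z : ℂ) : Tendsto (fun n : ℕ => ((n : ℂ) + z)⁻¹) atTop (𝓝 0) := by
  rw [tendsto_zero_iff_norm_tendsto_zero]
  have h1 : Tendsto (fun n : ℕ => ((n : ℝ) - ‖z‖)) atTop atTop :=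
    tendsto_atTop_add_const_right _ _ tendsto_natCast_atTop_atTop
  apply squeeze_zero' (Eventually.of_forall fun n => norm_nonneg _) _ h1.inv_tendsto_atTop
  filter_upwards [h1.eventually_gt_atTop 0] with n hn
  rw [norm_inv]
  exact inv_anti₀ hn (norm_nat_add_lb z n)

lemma tendsto_ratio (w z : ℂ) :
    Tendsto (fun n : ℕ => ((n : ℂ) + w) / ((n : ℂ) + z)) atTop (𝓝 1) := by
  have h : Tendsto (fun n : ℕ => 1 + (w - z) * ((n : ℂ) + z)⁻¹) atTop (𝓝 1) := by
    simpa using tendsto_const_nhds.add ((tendsto_inv_nat_add z).const_mul (w - z))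
  apply h.congr'
  have h1 : Tendsto (fun n : ℕ => ((n : ℝ) - ‖z‖)) atTop atTop :=
    tendsto_atTop_add_const_right _ _ tendsto_natCast_atTop_atTop
  filter_upwards [h1.eventually_gt_atTop 0] with n hn
  have hz : ((n : ℂ) + z) ≠ 0 := by
    intro h0
    have := norm_nat_add_lb z n
    rw [h0, norm_zero] at this
    linarith
  field_simp
  ring

lemma exists_c {x : ℂ} (hx : ∀ m : ℕ, x ≠ m) :
    ∃ c : ℝ, 0 < c ∧ ∀ m : ℕ, c * (m + 1) ≤ ‖(m : ℂ) - x‖ := by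
  set M : ℕ := 2 * ⌈‖x‖⌉₊ + 1 with hM
  have hne : (range (M + 1)).Nonempty := ⟨0, mem_range.mpr (Nat.succ_pos _)⟩
  obtain ⟨b, hb, hbmin⟩ := Finset.exists_min_image (range (M + 1))
    (fun m => ‖(m : ℂ) - x‖ / (m + 1)) hne
  have hpos : ∀ m : ℕ, (0:ℝ) < ‖(m : ℂ) - x‖ := by
    intro m
    rw [norm_pos_iff]
    intro h0
    exact hx m (by linear_combination -h0)
  refine ⟨min (‖(b : ℂ) - x‖ / (b + 1)) (1/4), lt_min (div_pos (hpos b) (by positivity)) (by norm_num), fun m => ?_⟩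
  rcases le_or_gt m M with hm | hm
  · have h1 := hbmin m (mem_range.mpr (Nat.lt_succ_of_le hm))
    have h2 : min (‖(b : ℂ) - x‖ / (b + 1)) (1/4) ≤ ‖(m : ℂ) - x‖ / (m + 1) :=
      le_trans (min_le_left _ _) h1
    have h3 : (0:ℝ) < (m:ℝ) + 1 := by positivity
    calc min (‖(b : ℂ) - x‖ / (b + 1)) (1/4) * (m + 1)
        ≤ ‖(m : ℂ) - x‖ / (m + 1) * (m + 1) := by
          exact mul_le_mul_of_nonneg_right h2 (by positivity)
      _ = ‖(m : ℂ) - x‖ := by field_simp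
  · -- m large : ‖m - x‖ ≥ m - ‖x‖ ≥ (m+1)/4
    have h1 : (m : ℝ) - ‖x‖ ≤ ‖(m : ℂ) - x‖ := by
      have := norm_nat_add_lb (-x) m
      simpa [sub_eq_add_neg] using this
    have h2 : ‖x‖ ≤ ⌈‖x‖⌉₊ := Nat.le_ceil _
    have h3 : (M : ℝ) < m := by exact_mod_cast hm
    have h4 : (2 * ⌈‖x‖⌉₊ + 1 : ℝ) ≤ (M : ℝ) := by rw [hM]; push_cast; linarith
    calc min (‖(b : ℂ) - x‖ / (b + 1)) (1/4) * (m + 1) ≤ 1/4 * (m+1) := by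
          apply mul_le_mul_of_nonneg_right (min_le_right _ _) (by positivity)
      _ ≤ (m : ℝ) - ‖x‖ := by nlinarith [Nat.cast_nonneg (α := ℝ) ⌈‖x‖⌉₊]
      _ ≤ ‖(m : ℂ) - x‖ := h1

lemma prod_shift_eq_descFactorial {k n : ℕ} (h : k ≤ n) :
    ∏ i ∈ range k, (n - k + i + 1) = n.descFactorial k := by
  rw [Nat.descFactorial_eq_prod_range, ← Finset.prod_range_reflect]
  exact Finset.prod_congr rfl fun i hi => by
    rw [mem_range] at hi; omega

lemma cast_descFactorial {n k : ℕ} (h : k ≤ n) :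
    ((n.descFactorial k : ℕ) : ℂ) = ∏ i ∈ range k, ((n : ℂ) - i) := by
  induction k with
  | zero => simp
  | succ k ih =>
      rw [Nat.descFactorial_succ, Finset.prod_range_succ, ← ih (le_of_lt (Nat.lt_of_succ_le h))]
      have : ((n - k : ℕ) : ℂ) = (n : ℂ) - k := by
        push_cast [Nat.le_of_succ_le h]; ring
      push_cast [this]
      ring


lemma poch_negx_ne_zero {x : ℂ} (hx : ∀ m : ℕ, x ≠ m) (j : ℕ) : poch (-x) j ≠ 0 := by
  have := poch_ne_zero hx 0 j
  simpa using this

lemma Gamma_neg_ne_zero {x : ℂ} (hx : ∀ m : ℕ, x ≠ m) : Complex.Gamma (-x) ≠ 0 :=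
  Complex.Gamma_ne_zero (fun m h => hx m (by linear_combination -h))

lemma key_identity (a : ℝ) (ha : a ≠ 0) {x : ℂ} (hx : ∀ m : ℕ, x ≠ m) (n : ℕ) :
    (a : ℂ) ^ n * charlier a n x / Complex.Gamma ((n : ℂ) - x)
      = (∑ k ∈ range (n + 1),
          (n.choose k : ℂ) * (a : ℂ) ^ k / poch (((n - k : ℕ) : ℂ) - x) k)
        / Complex.Gamma (-x) := by
  have ha' : (a : ℂ) ≠ 0 := by exact_mod_cast ha
  rw [Gamma_eq_poch hx n, charlier, Finset.mul_sum, Finset.sum_div, Finset.sum_div,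
    ← Finset.sum_range_reflect
      (fun k => (n.choose k : ℂ) * (a : ℂ) ^ k / poch (((n - k : ℕ) : ℂ) - x) k
        / Complex.Gamma (-x)) (n + 1)]
  refine Finset.sum_congr rfl fun j hj => ?_
  rw [mem_range, Nat.lt_succ_iff] at hj
  simp only [Nat.add_sub_cancel]
  rw [Nat.sub_sub_self hj, Nat.choose_symm hj]
  have hxj : ((j : ℕ) : ℂ) - x = -x + j := by ring
  rw [hxj]
  have hQ : poch (-x + j) (n - j) ≠ 0 := by
    rw [← hxj]; exact poch_ne_zero hx j (n - j)
  have hP : poch (-x) j ≠ 0 := poch_negx_ne_zero hx j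
  have hG : Complex.Gamma (-x) ≠ 0 := Gamma_neg_ne_zero hx
  have hD : (n.descFactorial j : ℂ) = (j.factorial : ℂ) * (n.choose j : ℂ) := by
    exact_mod_cast congrArg (Nat.cast : ℕ → ℂ) (Nat.descFactorial_eq_factorial_mul_choose n j)
  have hsplit : poch (-x) n = poch (-x) j * poch (-x + j) (n - j) := by
    rw [← poch_add]; congr 1; omega
  have e2 : poch (-(n : ℂ)) j * (-(1 / (a : ℂ))) ^ j
      = ((j.factorial : ℂ) * (n.choose j : ℂ)) * ((a : ℂ) ^ j)⁻¹ := by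
    have hsq : ((-1 : ℂ)) ^ j * ((-1 : ℂ)) ^ j = 1 := by rw [← mul_pow]; norm_num
    calc poch (-(n : ℂ)) j * (-(1 / (a : ℂ))) ^ j
        = ((-1 : ℂ) ^ j * (-1 : ℂ) ^ j) * ((n.descFactorial j : ℂ) * ((a : ℂ) ^ j)⁻¹) := by
          rw [poch_neg_nat, show -(1 / (a : ℂ)) = (-1) * (a : ℂ)⁻¹ by ring, mul_pow, inv_pow]
          ring
      _ = ((j.factorial : ℂ) * (n.choose j : ℂ)) * ((a : ℂ) ^ j)⁻¹ := by rw [hsq, hD]; ring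
  rw [hsplit, pow_sub₀ (a : ℂ) ha' hj]
  calc (a : ℂ) ^ n * (poch (-(n : ℂ)) j * poch (-x) j / (j.factorial : ℂ) * (-(1 / (a : ℂ))) ^ j)
        / (poch (-x) j * poch (-x + j) (n - j) * Complex.Gamma (-x))
      = (poch (-(n : ℂ)) j * (-(1 / (a : ℂ))) ^ j) * poch (-x) j * (a : ℂ) ^ n
        / ((j.factorial : ℂ) * (poch (-x) j * poch (-x + j) (n - j) * Complex.Gamma (-x))) := by
        ring
    _ = (n.choose j : ℂ) * ((a : ℂ) ^ n * ((a : ℂ) ^ j)⁻¹) / poch (-x + j) (n - j)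
        / Complex.Gamma (-x) := by
        rw [e2, div_div,
          div_eq_div_iff
            (mul_ne_zero (Nat.cast_ne_zero.mpr j.factorial_ne_zero)
              (mul_ne_zero (mul_ne_zero hP hQ) hG))
            (mul_ne_zero hQ hG)]
        ring

lemma caseB (a : ℝ) (ha : 0 < a) {x : ℂ} (hx : ∀ m : ℕ, x ≠ m) :
    Tendsto (fun n : ℕ => (a : ℂ) ^ n * charlier a n x / Complex.Gamma ((n : ℂ) - x)) atTop
      (𝓝 ((Real.exp a : ℂ) / Complex.Gamma (-x))) := by
  obtain ⟨c, hc, hcb⟩ := exists_c hx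
  set F : ℕ → ℕ → ℂ := fun n k =>
    if k ≤ n then (n.choose k : ℂ) * (a : ℂ) ^ k / poch (((n - k : ℕ) : ℂ) - x) k else 0 with hF
  -- pointwise limits
  have hab : ∀ k : ℕ, Tendsto (fun n => F n k) atTop (𝓝 ((a : ℂ) ^ k / (k.factorial : ℂ))) := by
    intro k
    have hfac : ((k.factorial : ℂ)) ≠ 0 := Nat.cast_ne_zero.mpr k.factorial_ne_zero
    have hlim : Tendsto
        (fun n : ℕ => (a : ℂ) ^ k / (k.factorial : ℂ) *
          ∏ i ∈ range k, (((n : ℂ) + -(i : ℂ)) / ((n : ℂ) + (-(k : ℂ) + (i : ℂ) - x))))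
        atTop (𝓝 ((a : ℂ) ^ k / (k.factorial : ℂ))) := by
      have hprod : Tendsto
          (fun n : ℕ => ∏ i ∈ range k, (((n : ℂ) + -(i : ℂ)) / ((n : ℂ) + (-(k : ℂ) + (i : ℂ) - x))))
          atTop (𝓝 (∏ _i ∈ range k, (1 : ℂ))) := by
        exact tendsto_finset_prod _ (fun i _ => tendsto_ratio (-(i : ℂ)) (-(k : ℂ) + (i : ℂ) - x))
      have := hprod.const_mul ((a : ℂ) ^ k / (k.factorial : ℂ))
      simpa using this
    apply hlim.congr'
    filter_upwards [eventually_ge_atTop k] with n hk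
    have h1 : poch (((n - k : ℕ) : ℂ) - x) k
        = ∏ i ∈ range k, ((n : ℂ) + (-(k : ℂ) + (i : ℂ) - x)) := by
      rw [poch]
      refine Finset.prod_congr rfl fun i _ => ?_
      rw [Nat.cast_sub hk]
      ring
    have h2 : (n.choose k : ℂ) = (∏ i ∈ range k, ((n : ℂ) + -(i : ℂ))) / (k.factorial : ℂ) := by
      rw [eq_div_iff hfac]
      have hD : ((n.descFactorial k : ℕ) : ℂ) = (k.factorial : ℂ) * (n.choose k : ℂ) := by
        exact_mod_cast congrArg (Nat.cast : ℕ → ℂ) (Nat.descFactorial_eq_factorial_mul_choose n k)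
      have := cast_descFactorial hk
      rw [hD] at this
      rw [mul_comm, this]
      exact Finset.prod_congr rfl fun i _ => by ring
    have hB : (∏ i ∈ range k, ((n : ℂ) + (-(k : ℂ) + (i : ℂ) - x))) ≠ 0 := by
      rw [← h1]
      have : (((n - k : ℕ) : ℂ) - x) = (((n - k : ℕ) : ℂ) - x) := rfl
      exact poch_ne_zero hx (n - k) k
    rw [hF]
    simp only [if_pos hk]
    rw [h1, h2, Finset.prod_div_distrib]
    field_simp
  -- bound
  have h_bound : ∀ n : ℕ, ∀ k : ℕ, ‖F n k‖ ≤ (a / c) ^ k / (k.factorial : ℝ) := by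
    intro n k
    by_cases hk : k ≤ n
    · rw [hF]
      simp only [if_pos hk]
      have hnorm : ‖(n.choose k : ℂ) * (a : ℂ) ^ k / poch (((n - k : ℕ) : ℂ) - x) k‖
          = (n.choose k : ℝ) * a ^ k / ‖poch (((n - k : ℕ) : ℂ) - x) k‖ := by
        rw [norm_div, norm_mul, norm_pow]
        simp [Complex.norm_natCast, Complex.norm_real, abs_of_pos ha]
      rw [hnorm]
      have hlb : c ^ k * (n.descFactorial k : ℝ) ≤ ‖poch (((n - k : ℕ) : ℂ) - x) k‖ := by
        rw [poch, norm_prod]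
        have : ∀ i ∈ range k, c * ((n - k + i : ℕ) + 1 : ℝ) ≤ ‖(((n - k : ℕ) : ℂ) - x) + i‖ := by
          intro i _
          have := hcb (n - k + i)
          have hcast : (((n - k + i : ℕ) : ℂ)) - x = (((n - k : ℕ) : ℂ) - x) + i := by
            push_cast
            ring
          rw [hcast] at this
          exact_mod_cast this
        calc c ^ k * (n.descFactorial k : ℝ)
            = ∏ i ∈ range k, (c * ((n - k + i : ℕ) + 1 : ℝ)) := by
              rw [Finset.prod_mul_distrib, Finset.prod_const, Finset.card_range,
                ← prod_shift_eq_descFactorial hk]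
              congr 1
              rw [Nat.cast_prod]
              exact Finset.prod_congr rfl fun i _ => by push_cast; ring
          _ ≤ ∏ i ∈ range k, ‖(((n - k : ℕ) : ℂ) - x) + i‖ := by
              refine Finset.prod_le_prod (fun i _ => by positivity) this
      have hdpos : (0 : ℝ) < c ^ k * (n.descFactorial k : ℝ) := by
        have : 0 < n.descFactorial k :=
          Nat.pos_of_ne_zero fun h0 => absurd (Nat.descFactorial_eq_zero_iff_lt.mp h0) (by omega)
        positivity
      calc (n.choose k : ℝ) * a ^ k / ‖poch (((n - k : ℕ) : ℂ) - x) k‖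
          ≤ (n.choose k : ℝ) * a ^ k / (c ^ k * (n.descFactorial k : ℝ)) := by
            apply div_le_div_of_nonneg_left _ hdpos hlb
            positivity
        _ = (a / c) ^ k / (k.factorial : ℝ) := by
            have hD : (n.descFactorial k : ℝ) = (k.factorial : ℝ) * (n.choose k : ℝ) := by
              exact_mod_cast congrArg (Nat.cast : ℕ → ℝ) (Nat.descFactorial_eq_factorial_mul_choose n k)
            have hch : (0 : ℝ) < (n.choose k : ℝ) := by
              exact_mod_cast Nat.choose_pos hk
            rw [hD, div_pow]
            field_simp
    · rw [hF]
      simp only [if_neg hk]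
      simp
      positivity
  -- Tannery
  have hsummable : Summable (fun k : ℕ => (a / c) ^ k / (k.factorial : ℝ)) :=
    Real.summable_pow_div_factorial (a / c)
  have htsum : Tendsto (fun n => ∑' k, F n k) atTop
      (𝓝 (∑' k : ℕ, (a : ℂ) ^ k / (k.factorial : ℂ))) :=
    tendsto_tsum_of_dominated_convergence hsummable hab (Eventually.of_forall h_bound)
  have hexp : (∑' k : ℕ, (a : ℂ) ^ k / (k.factorial : ℂ)) = (Real.exp a : ℂ) := by
    rw [Complex.ofReal_exp, Complex.exp_eq_exp_ℂ, NormedSpace.exp_eq_tsum_div]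
  rw [hexp] at htsum
  have hfin := htsum.div_const (Complex.Gamma (-x))
  apply hfin.congr
  intro n
  rw [key_identity a (ne_of_gt ha) hx n]
  congr 1
  rw [tsum_eq_sum (s := range (n + 1)) (fun k hk => by
    rw [hF]; exact if_neg (by rw [mem_range] at hk; omega))]
  exact Finset.sum_congr rfl fun k hk => by
    rw [hF]; exact if_pos (by rw [mem_range] at hk; omega)

lemma L0 (p : ℕ) (a : ℝ) :
    Tendsto (fun n : ℕ => (n : ℝ) ^ p * a ^ n / n.factorial) atTop (𝓝 0) := by
  have h1 := tendsto_pow_const_div_const_pow_of_one_lt p (one_lt_two (α := ℝ))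
  have h2 := FloorSemiring.tendsto_pow_div_factorial_atTop (K := ℝ) (2 * a)
  have h3 := h1.mul h2
  rw [mul_zero] at h3
  apply h3.congr
  intro n
  rw [mul_pow]
  have h2n : (2 : ℝ) ^ n ≠ 0 := by positivity
  field_simp

lemma L1 (p q : ℕ) (a : ℝ) (ha : 0 < a) :
    Tendsto (fun n : ℕ => (n : ℝ) ^ p * a ^ n / ((n - q).factorial : ℝ)) atTop (𝓝 0) := by
  apply squeeze_zero' (g := fun n : ℕ => (n : ℝ) ^ (p + q) * a ^ n / n.factorial)
    (Eventually.of_forall fun n => by positivity) _ (L0 (p + q) a)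
  filter_upwards [eventually_ge_atTop q] with n hn
  have hfac : (n.factorial : ℝ) = (n.descFactorial q : ℝ) * ((n - q).factorial : ℝ) := by
    have := Nat.choose_mul_factorial_mul_factorial hn
    have h2 : n.descFactorial q * (n - q).factorial = n.factorial := by
      rw [Nat.descFactorial_eq_factorial_mul_choose]
      rw [← this]
      ring
    exact_mod_cast h2.symm
  have hdq : (n.descFactorial q : ℝ) ≤ (n : ℝ) ^ q := by
    exact_mod_cast Nat.descFactorial_le_pow n q
  have hF : (0:ℝ) < ((n - q).factorial : ℝ) := by exact_mod_cast (n - q).factorial_pos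
  have hN : (0:ℝ) < (n.factorial : ℝ) := by exact_mod_cast n.factorial_pos
  rw [div_le_div_iff₀ hF hN, hfac]
  calc (n:ℝ)^p * a^n * ((n.descFactorial q : ℝ) * ((n-q).factorial : ℝ))
      = ((n:ℝ)^p * a^n * ((n-q).factorial : ℝ)) * (n.descFactorial q : ℝ) := by ring
    _ ≤ ((n:ℝ)^p * a^n * ((n-q).factorial : ℝ)) * (n:ℝ)^q := by
        apply mul_le_mul_of_nonneg_left hdq (by positivity)
    _ = (n:ℝ)^(p+q) * a^n * ((n-q).factorial : ℝ) := by rw [pow_add]; ring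

lemma GammaA (m n : ℕ) (hn : m + 1 ≤ n) :
    Complex.Gamma ((n : ℂ) - m) = ((n - (m + 1)).factorial : ℂ) := by
  have h1 : ((n - (m + 1) : ℕ) : ℂ) + 1 = (n : ℂ) - m := by
    have h2 : ((n - (m + 1) : ℕ) : ℂ) = (n : ℂ) - (m + 1) := by
      push_cast [Nat.cast_sub hn]
      ring
    rw [h2]; ring
  rw [← h1, Complex.Gamma_nat_eq_factorial]

lemma caseA (a : ℝ) (ha : 0 < a) (m : ℕ) :
    Tendsto (fun n : ℕ => (a : ℂ) ^ n * charlier a n (m : ℂ) / Complex.Gamma ((n : ℂ) - m))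
      atTop (𝓝 0) := by
  have hch : ∀ n, m ≤ n → charlier a n (m : ℂ)
      = ∑ j ∈ range (m + 1),
          poch (-(n : ℂ)) j * poch (-(m : ℂ)) j / (j.factorial : ℂ) * (-(1 / (a : ℂ))) ^ j := by
    intro n hn
    rw [charlier]
    symm
    apply Finset.sum_subset (range_subset_range.mpr (by omega))
    intro j _ hj
    rw [mem_range, not_lt] at hj
    have hz : poch (-(m : ℂ)) j = 0 := by
      rw [poch_neg_nat]
      have : m.descFactorial j = 0 := Nat.descFactorial_eq_zero_iff_lt.mpr (by omega)
      simp [this]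
    simp [hz]
  have hterm : ∀ j, Tendsto (fun n : ℕ =>
      (a : ℂ) ^ n * (poch (-(n : ℂ)) j * poch (-(m : ℂ)) j / (j.factorial : ℂ)
        * (-(1 / (a : ℂ))) ^ j) / Complex.Gamma ((n : ℂ) - m)) atTop (𝓝 0) := by
    intro j
    set P : ℝ := ‖poch (-(m : ℂ)) j‖ with hP
    set C : ℝ := P / ((j.factorial : ℝ) * a ^ j) with hC
    apply squeeze_zero_norm' (a := fun n : ℕ => C * ((n : ℝ) ^ j * a ^ n / ((n - (m + 1)).factorial : ℝ)))
    · filter_upwards [eventually_ge_atTop (m + 1)] with n hn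
      have hΓ := GammaA m n hn
      have hnorm : ‖(a : ℂ) ^ n * (poch (-(n : ℂ)) j * poch (-(m : ℂ)) j / (j.factorial : ℂ)
          * (-(1 / (a : ℂ))) ^ j) / Complex.Gamma ((n : ℂ) - m)‖
          = a ^ n * ((n.descFactorial j : ℝ) * P / (j.factorial : ℝ) * (1 / a) ^ j)
            / ((n - (m + 1)).factorial : ℝ) := by
        rw [hΓ, norm_div, norm_mul, norm_mul, norm_div, norm_pow, norm_pow, poch_neg_nat]
        simp [norm_mul, norm_pow, norm_neg, norm_div, norm_one, Complex.norm_natCast,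
          Complex.norm_real, abs_of_pos ha, hP]
      rw [hnorm]
      have hD : (n.descFactorial j : ℝ) ≤ (n : ℝ) ^ j := by
        exact_mod_cast Nat.descFactorial_le_pow n j
      have hF : (0:ℝ) < ((n - (m + 1)).factorial : ℝ) := by
        exact_mod_cast (n - (m + 1)).factorial_pos
      have hfj : (0:ℝ) < (j.factorial : ℝ) := by exact_mod_cast j.factorial_pos
      have hPn : 0 ≤ P := norm_nonneg _
      calc a ^ n * ((n.descFactorial j : ℝ) * P / (j.factorial : ℝ) * (1 / a) ^ j)
            / ((n - (m + 1)).factorial : ℝ)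
          = C * ((n.descFactorial j : ℝ) * a ^ n / ((n - (m + 1)).factorial : ℝ)) := by
            rw [hC]
            have ha0 : a ≠ 0 := ha.ne'
            field_simp
            ring_nf
            rw [mul_assoc _ (a ^ j), ← mul_pow, mul_inv_cancel₀ ha0, one_pow, mul_one]
        _ ≤ C * ((n : ℝ) ^ j * a ^ n / ((n - (m + 1)).factorial : ℝ)) := by
            apply mul_le_mul_of_nonneg_left _ (by positivity)
            gcongr
    · have := (L1 j (m + 1) a ha).const_mul C
      simpa using this
  have hsum : Tendsto (fun n : ℕ => ∑ j ∈ range (m + 1),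
      (a : ℂ) ^ n * (poch (-(n : ℂ)) j * poch (-(m : ℂ)) j / (j.factorial : ℂ)
        * (-(1 / (a : ℂ))) ^ j) / Complex.Gamma ((n : ℂ) - m)) atTop (𝓝 0) := by
    have h0 : (0 : ℂ) = ∑ _j ∈ range (m + 1), (0 : ℂ) := by simp
    rw [h0]
    exact tendsto_finset_sum _ fun j _ => hterm j
  apply hsum.congr'
  filter_upwards [eventually_ge_atTop m] with n hn
  rw [hch n hn, Finset.mul_sum, Finset.sum_div]


/-- **Mehler–Heine formula for Charlier polynomials.** For `a > 0` and every complex `x`,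
`lim_{n→∞} aⁿ C_n(x;a) / Γ(n−x) = e^a / Γ(−x)`. (Mathlib's `Complex.Gamma` vanishes at the
nonpositive integers, so `e^a / Γ(−x)` is `0` there, as intended.) -/
theorem charlier_mehler_heine (a : ℝ) (ha : 0 < a) (x : ℂ) :
    Tendsto (fun n : ℕ => (a : ℂ) ^ n * charlier a n x / Complex.Gamma ((n : ℂ) - x))
      atTop (𝓝 ((Real.exp a : ℂ) / Complex.Gamma (-x))) := by
  by_cases hx : ∀ m : ℕ, x ≠ m
  · exact caseB a ha hx
  · push_neg at hx
    obtain ⟨m, rfl⟩ := hx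
    rw [show Complex.Gamma (-((m : ℕ) : ℂ)) = 0 from Complex.Gamma_neg_nat_eq_zero m, div_zero]
    exact caseA a ha m
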